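/- Let (G,w,A,B) be a normalized instance (G bipartite with bipartitions the independent sets A and B, 4-claw free, every 3-claw centered at a weight-2 vertex, and A' ∪ B' independent, where X' denotes weight-1 vertices of X). Suppose there is no local improvement of A of size 1 or 2. Let (U_i,V_i,e_i)_{i∈I} be a consistent family of tail changes, let A_r = A \ ∪U_i, B_r = B \ ∪V_i, let B_1 be the set of weight-2 vertices v ∈ B_r with |δ(v) \ {e_i : i∈I}| ≤ 1, and let A_1 = N(B_1, A_r). Then |A_1| = |B_1|, A_1 consists only of weight-2 vertices, every vertex of A_1 has exactly one neighbor in B_1 and vice versa, so the edges between A_1 and B_1 form a perfect matching between them. -/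
import Mathlib


open scoped Classical

variable {V : Type*}

noncomputable def nbhd (G : SimpleGraph V) (X A : Finset V) : Finset V :=
  A.filter (fun a => a ∈ X ∨ ∃ x ∈ X, G.Adj x a)

noncomputable def wsum (w : V → ℕ) (X : Finset V) : ℕ := ∑ v ∈ X, w v

def IsLocalImprovement (G : SimpleGraph V) (w : V → ℕ) (A X : Finset V) : Prop :=
  wsum w X > wsum w (nbhd G X A) ∨
    (wsum w X = wsum w (nbhd G X A) ∧
      ((nbhd G X A).filter (fun v => w v = 2)).card < (X.filter (fun v => w v = 2)).card)

lemma wsum_union_le (w : V → ℕ) (s t : Finset V) :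
    wsum w (s ∪ t) ≤ wsum w s + wsum w t := by
  classical
  rw [wsum, wsum, wsum, ← Finset.union_sdiff_self_eq_union,
    Finset.sum_union Finset.sdiff_disjoint.symm]
  exact Nat.add_le_add_left (Finset.sum_le_sum_of_subset Finset.sdiff_subset) _

/-- In a normalized instance `(G, w, A, B)` with no local improvement of
size at most `6N + 2`, given a consistent family of tail changes `(U_i, V_i, e_i)` each
of size at most `N`, set `A_r = A \ ⋃ U_i`, `B_r = B \ ⋃ V_i`, let `B₁` consist of the
weight-2 vertices `v ∈ B_r` with at most one incident edge outside `{e_i}`, and let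
`A₁ = N(B₁, A_r)`.  Then `|A₁| = |B₁|`, all vertices of `A₁` have weight 2, every vertex
of `A₁` has exactly one neighbor in `B₁` and vice versa, i.e. the edges between `A₁` and
`B₁` form a perfect matching between them. -/
theorem tail_change_matching {ι : Type*} [Fintype ι] [Fintype V]
    (G : SimpleGraph V) (w : V → ℕ) (hw : ∀ v, w v = 1 ∨ w v = 2)
    (A B : Finset V)
    -- normalized instance: bipartite with bipartitions the independent sets A, B
    (hV : ∀ v : V, v ∈ A ∨ v ∈ B)
    (hAB : Disjoint A B)
    (hbip : ∀ u v : V, G.Adj u v → (u ∈ A ∧ v ∈ B) ∨ (u ∈ B ∧ v ∈ A))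
    -- 4-claw free, every 3-claw centered at a weight-2 vertex
    (h4claw : ¬ ∃ (c : V) (T : Finset V), T.card = 4 ∧ (∀ t ∈ T, G.Adj c t) ∧
        (∀ t₁ ∈ T, ∀ t₂ ∈ T, t₁ ≠ t₂ → ¬ G.Adj t₁ t₂))
    (h3claw : ∀ (c : V) (T : Finset V), T.card = 3 → (∀ t ∈ T, G.Adj c t) →
        (∀ t₁ ∈ T, ∀ t₂ ∈ T, t₁ ≠ t₂ → ¬ G.Adj t₁ t₂) → w c = 2)
    -- A' ∪ B' independent
    (hlight : ∀ u v : V, w u = 1 → w v = 1 → ¬ G.Adj u v)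
    -- a consistent family of tail changes, each of size at most N
    (N : ℕ) (Ui Vi : ι → Finset V) (ei : ι → Sym2 V)
    (hUsub : ∀ i, Ui i ⊆ A) (hVsub : ∀ i, Vi i ⊆ B)
    (hcardEq : ∀ i, (Ui i).card = (Vi i).card)
    (hwEq : ∀ i, wsum w (Ui i) = wsum w (Vi i))
    (hNV : ∀ i, nbhd G (Vi i) A ⊆ Ui i)
    (hincident : ∀ i, ∃ u ∈ Ui i, u ∈ ei i)
    (hsizeN : ∀ i, (Ui i).card ≤ N)
    (hcons : ∀ i j : ι, i ≠ j → Disjoint (Ui i) (Ui j) ∧ Disjoint (Vi i) (Vi j))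
    -- no local improvement of size at most 6N + 2
    (hnoimp : ∀ X : Finset V, X.card ≤ 6 * N + 2 →
        (∀ x ∈ X, ∀ y ∈ X, ¬ G.Adj x y) → ¬ IsLocalImprovement G w A X)
    -- the derived sets
    (Ar Br B₁ A₁ : Finset V)
    (hAr : Ar = A \ Finset.univ.biUnion Ui)
    (hBr : Br = B \ Finset.univ.biUnion Vi)
    (hB₁ : B₁ = Br.filter (fun v => w v = 2 ∧
        (Finset.univ.filter (fun u => G.Adj v u ∧ ∀ i : ι, ei i ≠ s(v, u))).card ≤ 1))
    (hA₁ : A₁ = nbhd G B₁ Ar) :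
    A₁.card = B₁.card ∧ (∀ u ∈ A₁, w u = 2) ∧
    (∀ u ∈ A₁, ∃! v : V, v ∈ B₁ ∧ G.Adj u v) ∧
    (∀ v ∈ B₁, ∃! u : V, u ∈ A₁ ∧ G.Adj u v) := by
  classical
  -- basic structure facts
  have hadjA : ∀ v ∈ B, ∀ a : V, G.Adj v a → a ∈ A := by
    intro v hv a hadj
    rcases hbip v a hadj with ⟨h1, _⟩ | ⟨_, h2⟩
    · exact absurd hv (Finset.disjoint_left.mp hAB h1)
    · exact h2
  have hAindep : ∀ x ∈ A, ∀ y ∈ A, ¬ G.Adj x y := by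
    intro x hx y hy hadj
    rcases hbip x y hadj with ⟨_, h2⟩ | ⟨h1, _⟩
    · exact Finset.disjoint_left.mp hAB hy h2
    · exact Finset.disjoint_left.mp hAB hx h1
  have hBindep : ∀ x ∈ B, ∀ y ∈ B, ¬ G.Adj x y := by
    intro x hx y hy hadj
    rcases hbip x y hadj with ⟨h1, _⟩ | ⟨_, h2⟩
    · exact Finset.disjoint_left.mp hAB h1 hx
    · exact Finset.disjoint_left.mp hAB h2 hy
  -- degree bound: every vertex of B has at most 3 neighbours (all lying in A)
  have hdeg3 : ∀ v ∈ B, (A.filter (fun a => G.Adj v a)).card ≤ 3 := by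
    intro v hv
    by_contra h
    push_neg at h
    obtain ⟨T, hTsub, hTcard⟩ := Finset.exists_subset_card_eq (by omega : 4 ≤ (A.filter (fun a => G.Adj v a)).card)
    exact h4claw ⟨v, T, hTcard, fun t ht => (Finset.mem_filter.mp (hTsub ht)).2,
      fun t₁ h₁ t₂ h₂ _ => hAindep t₁ (Finset.mem_filter.mp (hTsub h₁)).1 t₂
        (Finset.mem_filter.mp (hTsub h₂)).1⟩
  -- edges among the e_i from a vertex outside A go into the corresponding U_i
  have hedge : ∀ (i : ι) (v u : V), v ∉ A → ei i = s(v, u) → u ∈ Ui i := by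
    intro i v u hvA he
    obtain ⟨u', hu', hmem⟩ := hincident i
    rw [he, Sym2.mem_iff] at hmem
    rcases hmem with h | h
    · subst h; exact absurd (hUsub i hu') hvA
    · subst h; exact hu'
  -- covering a finite set of vertices by finitely many U_i
  have hcover : ∀ W : Finset V, (∀ a ∈ W, ∃ i, a ∈ Ui i) →
      ∃ S : Finset ι, S.card ≤ W.card ∧ ∀ a ∈ W, ∃ i ∈ S, a ∈ Ui i := by
    intro W
    induction W using Finset.induction_on with
    | empty => exact fun _ => ⟨∅, le_refl 0, fun a ha => absurd ha (Finset.notMem_empty a)⟩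
    | @insert a s hnotmem ih =>
      intro h
      obtain ⟨S, hScard, hScov⟩ := ih (fun b hb => h b (Finset.mem_insert_of_mem hb))
      obtain ⟨i, hi⟩ := h a (Finset.mem_insert_self a s)
      refine ⟨insert i S, ?_, ?_⟩
      · calc (insert i S).card ≤ S.card + 1 := Finset.card_insert_le i S
          _ ≤ s.card + 1 := by omega
          _ = (insert a s).card := (Finset.card_insert_of_notMem hnotmem).symm
      · intro b hb
        rcases Finset.mem_insert.mp hb with rfl | hb
        · exact ⟨i, Finset.mem_insert_self i S, hi⟩
        · obtain ⟨j, hj, hbj⟩ := hScov b hb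
          exact ⟨j, Finset.mem_insert_of_mem hj, hbj⟩
  -- the workhorse: building a local improvement yields a contradiction
  have key : ∀ (S : Finset ι) (T D : Finset V), T ⊆ B → (∀ t ∈ T, w t = 2) →
      (∀ t ∈ T, ∀ i, t ∉ Vi i) → wsum w D < 2 * T.card →
      T.card + S.card * N ≤ 6 * N + 2 →
      (∀ t ∈ T, ∀ a : V, G.Adj t a → a ∈ D ∨ ∃ i ∈ S, a ∈ Ui i) → False := by
    intro S T D hTB hT2 hTV hD hcard hcov
    set X := T ∪ S.biUnion Vi with hX
    have hXB : X ⊆ B := by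
      intro x hx
      rcases Finset.mem_union.mp hx with h | h
      · exact hTB h
      · obtain ⟨i, _, hxi⟩ := Finset.mem_biUnion.mp h
        exact hVsub i hxi
    have hVsum : ∑ i ∈ S, (Vi i).card ≤ S.card * N := by
      have h1 : ∑ i ∈ S, (Vi i).card ≤ ∑ _i ∈ S, N :=
        Finset.sum_le_sum (fun i _ => (hcardEq i) ▸ hsizeN i)
      rwa [Finset.sum_const, smul_eq_mul] at h1
    have hXcard : X.card ≤ 6 * N + 2 := by
      have h1 : X.card ≤ T.card + (S.biUnion Vi).card := Finset.card_union_le T _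
      have h2 : (S.biUnion Vi).card ≤ ∑ i ∈ S, (Vi i).card := Finset.card_biUnion_le
      omega
    have hpdV : (↑S : Set ι).PairwiseDisjoint Vi := fun i _ j _ hij => (hcons i j hij).2
    have hpdU : (↑S : Set ι).PairwiseDisjoint Ui := fun i _ j _ hij => (hcons i j hij).1
    have hTdisj : Disjoint T (S.biUnion Vi) := by
      refine Finset.disjoint_left.mpr (fun a ha hm => ?_)
      obtain ⟨i, _, hai⟩ := Finset.mem_biUnion.mp hm
      exact hTV a ha i hai
    have hXsum : wsum w X = wsum w T + ∑ i ∈ S, wsum w (Vi i) := by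
      rw [hX, wsum, Finset.sum_union hTdisj, Finset.sum_biUnion hpdV]
      rfl
    have hnb : nbhd G X A ⊆ D ∪ S.biUnion Ui := by
      intro a ha
      obtain ⟨haA, hmem⟩ := Finset.mem_filter.mp ha
      rcases hmem with haX | ⟨x, hxX, hadj⟩
      · exact absurd (hXB haX) (Finset.disjoint_left.mp hAB haA)
      · rcases Finset.mem_union.mp hxX with hxT | hxV
        · rcases hcov x hxT a hadj with h | ⟨i, hiS, hai⟩
          · exact Finset.mem_union_left _ h
          · exact Finset.mem_union_right _ (Finset.mem_biUnion.mpr ⟨i, hiS, hai⟩)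
        · obtain ⟨i, hiS, hxi⟩ := Finset.mem_biUnion.mp hxV
          have : a ∈ nbhd G (Vi i) A :=
            Finset.mem_filter.mpr ⟨haA, Or.inr ⟨x, hxi, hadj⟩⟩
          exact Finset.mem_union_right _ (Finset.mem_biUnion.mpr ⟨i, hiS, hNV i this⟩)
    have hsum2 : wsum w (nbhd G X A) ≤ wsum w D + ∑ i ∈ S, wsum w (Ui i) := by
      calc wsum w (nbhd G X A) ≤ wsum w (D ∪ S.biUnion Ui) :=
            Finset.sum_le_sum_of_subset hnb
        _ ≤ wsum w D + wsum w (S.biUnion Ui) := wsum_union_le w _ _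
        _ = wsum w D + ∑ i ∈ S, wsum w (Ui i) := by
            simp only [wsum, Finset.sum_biUnion hpdU]
    have hTsum : wsum w T = 2 * T.card := by
      rw [wsum, Finset.sum_congr rfl (fun t ht => hT2 t ht), Finset.sum_const, smul_eq_mul,
        Nat.mul_comm]
    have hUV : ∑ i ∈ S, wsum w (Ui i) = ∑ i ∈ S, wsum w (Vi i) :=
      Finset.sum_congr rfl (fun i _ => hwEq i)
    have himp : IsLocalImprovement G w A X := by
      left
      omega
    exact hnoimp X hXcard (fun x hx y hy => hBindep x (hXB hx) y (hXB hy)) himp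
  -- basic membership facts for B₁
  have hB1mem : ∀ v ∈ B₁, v ∈ B ∧ w v = 2 ∧ (∀ i, v ∉ Vi i) ∧
      (Finset.univ.filter (fun u => G.Adj v u ∧ ∀ i : ι, ei i ≠ s(v, u))).card ≤ 1 := by
    intro v hv
    rw [hB₁, Finset.mem_filter] at hv
    obtain ⟨hvBr, hv2, hvcard⟩ := hv
    rw [hBr, Finset.mem_sdiff] at hvBr
    exact ⟨hvBr.1, hv2, fun i hvi => hvBr.2 (Finset.mem_biUnion.mpr ⟨i, Finset.mem_univ i, hvi⟩),
      hvcard⟩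
  have hArmem : ∀ u ∈ Ar, u ∈ A ∧ ∀ i, u ∉ Ui i := by
    intro u hu
    rw [hAr, Finset.mem_sdiff] at hu
    exact ⟨hu.1, fun i hui => hu.2 (Finset.mem_biUnion.mpr ⟨i, Finset.mem_univ i, hui⟩)⟩
  -- neighbours of v ∈ B₁ in Ar are "free" vertices (no e_i uses that edge)
  have hfreeAr : ∀ v ∈ B₁, ∀ u ∈ Ar, G.Adj v u →
      u ∈ Finset.univ.filter (fun u => G.Adj v u ∧ ∀ i : ι, ei i ≠ s(v, u)) := by
    intro v hv u hu hadj
    refine Finset.mem_filter.mpr ⟨Finset.mem_univ u, hadj, fun i he => ?_⟩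
    have hvB := (hB1mem v hv).1
    have hvnA : v ∉ A := fun h => Finset.disjoint_left.mp hAB h hvB
    exact (hArmem u hu).2 i (hedge i v u hvnA he)
  -- at most one Ar-neighbour
  have huniqAr : ∀ v ∈ B₁, ∀ u ∈ Ar, ∀ u' ∈ Ar, G.Adj v u → G.Adj v u' → u = u' := by
    intro v hv u hu u' hu' h1 h2
    exact Finset.card_le_one.mp (hB1mem v hv).2.2.2 u (hfreeAr v hv u hu h1) u'
      (hfreeAr v hv u' hu' h2)
  -- non-free neighbours are covered by the U_i
  have hcovered : ∀ v ∈ B₁, ∀ a : V, G.Adj v a →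
      a ∉ Finset.univ.filter (fun u => G.Adj v u ∧ ∀ i : ι, ei i ≠ s(v, a)) →
      ∃ i, a ∈ Ui i := by
    intro v hv a hadj hnf
    by_contra hn
    push_neg at hn
    by_cases hfree : ∀ i : ι, ei i ≠ s(v, a)
    · exact hnf (Finset.mem_filter.mpr ⟨Finset.mem_univ a, hadj, hfree⟩)
    · push_neg at hfree
      obtain ⟨i, hi⟩ := hfree
      have hvB := (hB1mem v hv).1
      have hvnA : v ∉ A := fun h => Finset.disjoint_left.mp hAB h hvB
      exact hn i (hedge i v a hvnA hi)
  -- every v ∈ B₁ has a neighbour in Ar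
  have hexAr : ∀ v ∈ B₁, ∃ u ∈ Ar, G.Adj v u := by
    intro v hv
    by_contra h
    push_neg at h
    obtain ⟨hvB, hv2, hvV, _⟩ := hB1mem v hv
    set W := A.filter (fun a => G.Adj v a) with hWdef
    have hWcov : ∀ a ∈ W, ∃ i, a ∈ Ui i := by
      intro a ha
      obtain ⟨haA, hadj⟩ := Finset.mem_filter.mp ha
      by_contra hn
      push_neg at hn
      have haAr : a ∈ Ar := by
        rw [hAr, Finset.mem_sdiff]
        refine ⟨haA, fun hm => ?_⟩
        obtain ⟨i, _, hai⟩ := Finset.mem_biUnion.mp hm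
        exact hn i hai
      exact h a haAr hadj
    obtain ⟨S, hScard, hScov⟩ := hcover W hWcov
    have hS3 : S.card ≤ 3 := le_trans hScard (hdeg3 v hvB)
    refine key S {v} ∅ (Finset.singleton_subset_iff.mpr hvB)
      (fun t ht => (Finset.mem_singleton.mp ht) ▸ hv2)
      (fun t ht i => (Finset.mem_singleton.mp ht) ▸ hvV i)
      (by simp [wsum]) ?_ ?_
    · have : S.card * N ≤ 3 * N := Nat.mul_le_mul_right N hS3
      simp only [Finset.card_singleton]
      omega
    · intro t ht a hadj
      rw [Finset.mem_singleton.mp ht] at hadj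
      have haA : a ∈ A := hadjA v hvB a hadj
      obtain ⟨i, hiS, hai⟩ := hScov a (Finset.mem_filter.mpr ⟨haA, hadj⟩)
      exact Or.inr ⟨i, hiS, hai⟩
  -- characterisation of A₁
  have hA1mem : ∀ u, u ∈ A₁ ↔ u ∈ Ar ∧ ∃ v ∈ B₁, G.Adj v u := by
    intro u
    rw [hA₁, nbhd, Finset.mem_filter]
    constructor
    · rintro ⟨hu, h | h⟩
      · exact absurd ((hB1mem u h).1) (Finset.disjoint_left.mp hAB (hArmem u hu).1)
      · exact ⟨hu, h⟩
    · rintro ⟨hu, v, hv, hadj⟩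
      exact ⟨hu, Or.inr ⟨v, hv, hadj⟩⟩
  -- main contradiction lemma at a fixed u ∈ Ar
  have hkey2 : ∀ u ∈ Ar, ∀ T : Finset V, T ⊆ B₁ → (∀ t ∈ T, G.Adj t u) →
      w u < 2 * T.card → T.card ≤ 2 → False := by
    intro u huAr T hTB1 hTadj hwu hTc
    set W := T.biUnion (fun t => (A.filter (fun a => G.Adj t a)).erase u) with hWdef
    have hWcov : ∀ a ∈ W, ∃ i, a ∈ Ui i := by
      intro a ha
      obtain ⟨t, htT, hta⟩ := Finset.mem_biUnion.mp ha
      obtain ⟨hane, haf⟩ := Finset.mem_erase.mp hta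
      obtain ⟨haA, hadj⟩ := Finset.mem_filter.mp haf
      have htB1 := hTB1 htT
      refine hcovered t htB1 a hadj (fun hmem => ?_)
      -- a would be a free neighbour, as is u, contradicting a ≠ u
      have hu_free := hfreeAr t htB1 u huAr (hTadj t htT)
      obtain ⟨_, _, hfa⟩ := Finset.mem_filter.mp hmem
      have ha_free : a ∈ Finset.univ.filter
          (fun x => G.Adj t x ∧ ∀ i : ι, ei i ≠ s(t, x)) :=
        Finset.mem_filter.mpr ⟨Finset.mem_univ a, hadj, hfa⟩
      exact hane (Finset.card_le_one.mp (hB1mem t htB1).2.2.2 a ha_free u hu_free)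
    have hWcard : W.card ≤ 2 * T.card := by
      have h1 : W.card ≤ ∑ t ∈ T, ((A.filter (fun a => G.Adj t a)).erase u).card :=
        Finset.card_biUnion_le
      have h2 : ∀ t ∈ T, ((A.filter (fun a => G.Adj t a)).erase u).card ≤ 2 := by
        intro t ht
        have huf : u ∈ A.filter (fun a => G.Adj t a) :=
          Finset.mem_filter.mpr ⟨(hArmem u huAr).1, hTadj t ht⟩
        rw [Finset.card_erase_of_mem huf]
        have := hdeg3 t (hB1mem t (hTB1 ht)).1
        omega
      have h3 : ∑ t ∈ T, ((A.filter (fun a => G.Adj t a)).erase u).card ≤ ∑ _t ∈ T, 2 :=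
        Finset.sum_le_sum h2
      rw [Finset.sum_const, smul_eq_mul] at h3
      omega
    obtain ⟨S, hScard, hScov⟩ := hcover W hWcov
    have hS4 : S.card ≤ 4 := by omega
    refine key S T {u} (fun t ht => (hB1mem t (hTB1 ht)).1)
      (fun t ht => (hB1mem t (hTB1 ht)).2.1)
      (fun t ht i => (hB1mem t (hTB1 ht)).2.2.1 i)
      (by simpa [wsum] using hwu) ?_ ?_
    · have : S.card * N ≤ 4 * N := Nat.mul_le_mul_right N hS4
      omega
    · intro t ht a hadj
      by_cases hau : a = u
      · exact Or.inl (hau ▸ Finset.mem_singleton_self u)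
      · have haA : a ∈ A := hadjA t (hB1mem t (hTB1 ht)).1 a hadj
        have haW : a ∈ W := Finset.mem_biUnion.mpr
          ⟨t, ht, Finset.mem_erase.mpr ⟨hau, Finset.mem_filter.mpr ⟨haA, hadj⟩⟩⟩
        obtain ⟨i, hiS, hai⟩ := hScov a haW
        exact Or.inr ⟨i, hiS, hai⟩
  -- all vertices of A₁ have weight 2
  have hA1w : ∀ u ∈ A₁, w u = 2 := by
    intro u hu
    obtain ⟨huAr, v, hv, hadj⟩ := (hA1mem u).mp hu
    rcases hw u with h1 | h2
    · exfalso
      refine hkey2 u huAr {v} (Finset.singleton_subset_iff.mpr hv)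
        (fun t ht => (Finset.mem_singleton.mp ht) ▸ hadj) ?_ (by simp)
      simp [h1]
    · exact h2
  -- each u ∈ A₁ has a unique B₁ neighbour
  have uniqueB : ∀ u ∈ A₁, ∀ v v' : V, v ∈ B₁ → v' ∈ B₁ → G.Adj u v → G.Adj u v' → v = v' := by
    intro u hu v v' hv hv' h1 h2
    by_contra hne
    have huAr := ((hA1mem u).mp hu).1
    refine hkey2 u huAr {v, v'} ?_ ?_ ?_ ?_
    · intro t ht
      rcases Finset.mem_insert.mp ht with rfl | ht
      · exact hv
      · exact (Finset.mem_singleton.mp ht) ▸ hv'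
    · intro t ht
      rcases Finset.mem_insert.mp ht with rfl | ht
      · exact h1.symm
      · exact (Finset.mem_singleton.mp ht) ▸ h2.symm
    · rw [Finset.card_insert_of_notMem (fun h => hne (Finset.mem_singleton.mp h)),
        Finset.card_singleton]
      rcases hw u with h | h <;> omega
    · rw [Finset.card_insert_of_notMem (fun h => hne (Finset.mem_singleton.mp h)),
        Finset.card_singleton]
  have existsB : ∀ u ∈ A₁, ∃ v, v ∈ B₁ ∧ G.Adj u v := by
    intro u hu
    obtain ⟨_, v, hv, hadj⟩ := (hA1mem u).mp hu
    exact ⟨v, hv, hadj.symm⟩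
  have existsA : ∀ v ∈ B₁, ∃ u, u ∈ A₁ ∧ G.Adj u v := by
    intro v hv
    obtain ⟨u, huAr, hadj⟩ := hexAr v hv
    exact ⟨u, (hA1mem u).mpr ⟨huAr, v, hv, hadj⟩, hadj.symm⟩
  have uniqueA : ∀ v ∈ B₁, ∀ u u' : V, u ∈ A₁ → u' ∈ A₁ → G.Adj u v → G.Adj u' v → u = u' := by
    intro v hv u u' hu hu' h1 h2
    exact huniqAr v hv u ((hA1mem u).mp hu).1 u' ((hA1mem u').mp hu').1 h1.symm h2.symm
  refine ⟨?_, hA1w, ?_, ?_⟩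
  · refine Finset.card_bij (fun u hu => (existsB u hu).choose) ?_ ?_ ?_
    · intro u hu
      exact (existsB u hu).choose_spec.1
    · intro u hu u' hu' heq
      have s1 := (existsB u hu).choose_spec
      have s2 := (existsB u' hu').choose_spec
      have heq' : (existsB u hu).choose = (existsB u' hu').choose := heq
      have h2' : G.Adj u' (existsB u hu).choose := by rw [heq']; exact s2.2
      exact uniqueA _ s1.1 u u' hu hu' s1.2 h2'
    · intro v hv
      obtain ⟨u, hu, hadj⟩ := existsA v hv
      refine ⟨u, hu, ?_⟩
      have s1 := (existsB u hu).choose_spec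
      exact uniqueB u hu _ v s1.1 hv s1.2 hadj
  · intro u hu
    obtain ⟨v, hv, hadj⟩ := existsB u hu
    exact ⟨v, ⟨hv, hadj⟩, fun v' hv' => uniqueB u hu v' v hv'.1 hv hv'.2 hadj⟩
  · intro v hv
    obtain ⟨u, hu, hadj⟩ := existsA v hv
    exact ⟨u, ⟨hu, hadj⟩, fun u' hu' => uniqueA v hv u' u hu'.1 hu hu'.2 hadj⟩
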